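/- In a search game, if there exists a compatible mixed outcome f, then the socially optimal payoff satisfies U_opt ≥ ∑_{ω∈Ω} f(ω)·μ(ω)·v_s(ω), where μ is the common prior and v_s the social value function. -/

import Mathlib

open scoped Classical
noncomputable section

variable {N Ω : Type}

/-- `P` is a partition of the finite type `Ω` into nonempty, pairwise disjoint cells. -/
def IsPartition [Fintype Ω] [DecidableEq Ω] (P : Finset (Finset Ω)) : Prop :=
  (∀ π ∈ P, π.Nonempty) ∧
  (∀ π ∈ P, ∀ π' ∈ P, π ≠ π' → Disjoint π π') ∧
  (∀ ω : Ω, ∃ π ∈ P, ω ∈ π)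

/-- `f` is a valid strategy for player `i`: in every cell it searches a subset of
the cell of size at most the capacity `K i`. -/
def ValidFor [DecidableEq Ω] (Part : N → Finset (Finset Ω)) (K : N → ℕ) (i : N)
    (f : Finset Ω → Finset Ω) : Prop :=
  ∀ π ∈ Part i, f π ⊆ π ∧ (f π).card ≤ K i

/-- A valid pure strategy profile. -/
def ValidStrat [DecidableEq Ω] (Part : N → Finset (Finset Ω)) (K : N → ℕ)
    (s : N → Finset Ω → Finset Ω) : Prop :=
  ∀ i, ValidFor Part K i (s i)

/-- Player `i` searches location `ω` under profile `s` (when the prize is at `ω`). -/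
def searchesAt (Part : N → Finset (Finset Ω)) (s : N → Finset Ω → Finset Ω)
    (i : N) (ω : Ω) : Prop :=
  ∃ π ∈ Part i, ω ∈ π ∧ ω ∈ s i π

/-- Location `ω` is searched by some player under profile `s`. -/
def searched (Part : N → Finset (Finset Ω)) (s : N → Finset Ω → Finset Ω)
    (ω : Ω) : Prop :=
  ∃ i, searchesAt Part s i ω

/-- The number of players searching `ω` under `s`. -/
def mcount [Fintype N] (Part : N → Finset (Finset Ω))
    (s : N → Finset Ω → Finset Ω) (ω : Ω) : ℕ :=
  (Finset.univ.filter fun i => searchesAt Part s i ω).card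


def capN [Fintype N] [DecidableEq Ω] (Part : N → Finset (Finset Ω)) (K : N → ℕ)
    (W : Finset Ω) : ℕ :=
  ∑ i, K i * ((Part i).filter fun π => (π ∩ W).Nonempty).card

def IndepS [Fintype N] [DecidableEq Ω] (Part : N → Finset (Finset Ω)) (K : N → ℕ)
    (S : Finset Ω) : Prop :=
  ∀ W ⊆ S, W.card ≤ capN Part K W

variable [Fintype N] [DecidableEq Ω] {Part : N → Finset (Finset Ω)} {K : N → ℕ}

lemma capN_mono {A B : Finset Ω} (h : A ⊆ B) : capN Part K A ≤ capN Part K B := by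
  refine Finset.sum_le_sum fun i _ => Nat.mul_le_mul_left _ ?_
  refine Finset.card_le_card fun π hπ => ?_
  simp only [Finset.mem_filter] at hπ ⊢
  exact ⟨hπ.1, hπ.2.mono (Finset.inter_subset_inter_left h)⟩

lemma capN_submod (A B : Finset Ω) :
    capN Part K (A ∪ B) + capN Part K (A ∩ B) ≤ capN Part K A + capN Part K B := by
  have key : ∀ i : N,
      ((Part i).filter fun π => (π ∩ (A ∪ B)).Nonempty).card
        + ((Part i).filter fun π => (π ∩ (A ∩ B)).Nonempty).card
      ≤ ((Part i).filter fun π => (π ∩ A).Nonempty).card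
        + ((Part i).filter fun π => (π ∩ B).Nonempty).card := by
    intro i
    simp only [Finset.card_filter, ← Finset.sum_add_distrib]
    refine Finset.sum_le_sum fun π _ => ?_
    by_cases hAB : (π ∩ (A ∩ B)).Nonempty
    · have hA : (π ∩ A).Nonempty := hAB.mono (by gcongr; exact Finset.inter_subset_left)
      have hB : (π ∩ B).Nonempty := hAB.mono (by gcongr; exact Finset.inter_subset_right)
      have hU : (π ∩ (A ∪ B)).Nonempty := hA.mono (by gcongr; exact Finset.subset_union_left)
      simp [hA, hB, hU, hAB]
    · by_cases hU : (π ∩ (A ∪ B)).Nonempty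
      · have : (π ∩ A).Nonempty ∨ (π ∩ B).Nonempty := by
          obtain ⟨x, hx⟩ := hU
          simp only [Finset.mem_inter, Finset.mem_union] at hx
          rcases hx.2 with h | h
          · exact Or.inl ⟨x, Finset.mem_inter.2 ⟨hx.1, h⟩⟩
          · exact Or.inr ⟨x, Finset.mem_inter.2 ⟨hx.1, h⟩⟩
        rcases this with h | h <;> simp [h, hU, hAB] <;> split <;> simp
      · simp [hU, hAB]
  calc capN Part K (A ∪ B) + capN Part K (A ∩ B)
      = ∑ i, (K i * ((Part i).filter fun π => (π ∩ (A ∪ B)).Nonempty).card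
            + K i * ((Part i).filter fun π => (π ∩ (A ∩ B)).Nonempty).card) := by
        rw [capN, capN, ← Finset.sum_add_distrib]
    _ ≤ ∑ i, (K i * ((Part i).filter fun π => (π ∩ A).Nonempty).card
            + K i * ((Part i).filter fun π => (π ∩ B).Nonempty).card) := by
        refine Finset.sum_le_sum fun i _ => ?_
        rw [← Nat.mul_add, ← Nat.mul_add]
        exact Nat.mul_le_mul_left _ (key i)
    _ = _ := by rw [capN, capN, ← Finset.sum_add_distrib]

lemma indepS_subset {S T : Finset Ω} (h : IndepS Part K S) (hTS : T ⊆ S) :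
    IndepS Part K T := fun W hW => h W (hW.trans hTS)

/-- union of tight sets is tight -/
lemma exists_tight_union {S : Finset Ω} (hS : IndepS Part K S) :
    ∀ X : Finset Ω, Disjoint X S →
      (∀ x ∈ X, ∃ W : Finset Ω, W ⊆ insert x S ∧ x ∈ W ∧
          capN Part K W ≤ (W ∩ S).card) →
      ∃ U : Finset Ω, X ⊆ U ∧ U ⊆ X ∪ S ∧ capN Part K U ≤ (U ∩ S).card := by
  intro X
  induction X using Finset.induction_on with
  | empty =>
      intro _ _
      exact ⟨∅, Finset.Subset.refl _, Finset.empty_subset _, by simp [capN]⟩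
  | @insert a X ha ih =>
      intro hdisj htight
      have hdX : Disjoint X S := by
        refine Finset.disjoint_left.2 fun x hx => Finset.disjoint_left.1 hdisj ?_
        exact Finset.mem_insert_of_mem hx
      obtain ⟨U, hXU, hUsub, hU⟩ := ih hdX fun x hx => htight x (Finset.mem_insert_of_mem hx)
      obtain ⟨Wa, hWa_sub, haWa, hWa⟩ := htight a (Finset.mem_insert_self _ _)
      have haS : a ∉ S := Finset.disjoint_left.1 hdisj (Finset.mem_insert_self _ _)
      refine ⟨U ∪ Wa, ?_, ?_, ?_⟩
      · intro x hx
        rcases Finset.mem_insert.1 hx with rfl | hx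
        · exact Finset.mem_union_right _ haWa
        · exact Finset.mem_union_left _ (hXU hx)
      · intro x hx
        rcases Finset.mem_union.1 hx with hx | hx
        · rcases Finset.mem_union.1 (hUsub hx) with h | h
          · exact Finset.mem_union_left _ (Finset.mem_insert_of_mem h)
          · exact Finset.mem_union_right _ h
        · rcases Finset.mem_insert.1 (hWa_sub hx) with rfl | h
          · exact Finset.mem_union_left _ (Finset.mem_insert_self _ _)
          · exact Finset.mem_union_right _ h
      · -- key counting
        have hUWaS : U ∩ Wa ⊆ S := by
          intro x hx
          obtain ⟨hxU, hxWa⟩ := Finset.mem_inter.1 hx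
          rcases Finset.mem_insert.1 (hWa_sub hxWa) with rfl | h
          · rcases Finset.mem_union.1 (hUsub hxU) with h | h
            · exact absurd h ha
            · exact absurd h haS
          · exact h
        have h1 : (U ∩ Wa).card ≤ capN Part K (U ∩ Wa) := hS _ hUWaS
        have h2 : capN Part K (U ∪ Wa) + capN Part K (U ∩ Wa)
            ≤ capN Part K U + capN Part K Wa := capN_submod U Wa
        have e1 : (U ∪ Wa) ∩ S = (U ∩ S) ∪ (Wa ∩ S) := Finset.union_inter_distrib_right U Wa S
        have e2 : (U ∩ Wa) ∩ S = (U ∩ S) ∩ (Wa ∩ S) := by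
          ext x; simp only [Finset.mem_inter]
          exact ⟨fun ⟨⟨a, b⟩, c⟩ => ⟨⟨a, c⟩, ⟨b, c⟩⟩, fun ⟨⟨a, c⟩, ⟨b, _⟩⟩ => ⟨⟨a, b⟩, c⟩⟩
        have h3 : ((U ∪ Wa) ∩ S).card + ((U ∩ Wa) ∩ S).card
            = (U ∩ S).card + (Wa ∩ S).card := by
          rw [e1, e2]; exact Finset.card_union_add_card_inter _ _
        have h4 : ((U ∩ Wa) ∩ S).card = (U ∩ Wa).card := by
          rw [Finset.inter_eq_left.2 hUWaS]
        omega

/-- L4: if `S` is a maximal independent subset of `A`, then `∑_{A} f ≤ |S|`. -/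
lemma sum_f_le_card {f : Ω → ℝ}
    (hF : ∀ W : Finset Ω, ∑ x ∈ W, f x ≤ (capN Part K W : ℝ))
    (hf0 : ∀ x, 0 ≤ f x) (hf1 : ∀ x, f x ≤ 1)
    {S A : Finset Ω} (hI : IndepS Part K S) (hSA : S ⊆ A)
    (hmax : ∀ x ∈ A, x ∉ S → ¬ IndepS Part K (insert x S)) :
    ∑ x ∈ A, f x ≤ (S.card : ℝ) := by
  have htight : ∀ x ∈ A \ S, ∃ W : Finset Ω, W ⊆ insert x S ∧ x ∈ W ∧
      capN Part K W ≤ (W ∩ S).card := by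
    intro x hx
    obtain ⟨hxA, hxS⟩ := Finset.mem_sdiff.1 hx
    have := hmax x hxA hxS
    simp only [IndepS, not_forall] at this
    obtain ⟨W, hWsub, hW⟩ := this
    have hxW : x ∈ W := by
      by_contra hxW
      have : W ⊆ S := fun y hy => by
        rcases Finset.mem_insert.1 (hWsub hy) with rfl | h
        · exact absurd hy hxW
        · exact h
      exact hW (hI W this)
    refine ⟨W, hWsub, hxW, ?_⟩
    have hcard : W.card = (W ∩ S).card + 1 := by
      have : W ∩ S = W.erase x := by
        ext y
        simp only [Finset.mem_inter, Finset.mem_erase]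
        constructor
        · rintro ⟨h1, h2⟩
          exact ⟨fun h => hxS (h ▸ h2), h1⟩
        · rintro ⟨h1, h2⟩
          rcases Finset.mem_insert.1 (hWsub h2) with rfl | h
          · exact absurd rfl h1
          · exact ⟨h2, h⟩
      rw [this, Finset.card_erase_of_mem hxW]
      omega
    omega
  obtain ⟨U, hXU, hUsub, hU⟩ := exists_tight_union hI (A \ S) (Finset.sdiff_disjoint) htight
  have split : ∑ x ∈ A, f x = ∑ x ∈ A ∩ U, f x + ∑ x ∈ A \ U, f x :=
    (Finset.sum_inter_add_sum_sdiff A U f).symm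
  have h1 : ∑ x ∈ A ∩ U, f x ≤ ((U ∩ S).card : ℝ) := by
    calc ∑ x ∈ A ∩ U, f x ≤ ∑ x ∈ U, f x :=
          Finset.sum_le_sum_of_subset_of_nonneg Finset.inter_subset_right
            (fun i _ _ => hf0 i)
      _ ≤ (capN Part K U : ℝ) := hF U
      _ ≤ ((U ∩ S).card : ℝ) := by exact_mod_cast Nat.cast_le.2 hU
  have hAU : A \ U ⊆ S \ U := by
    intro x hx
    obtain ⟨hxA, hxU⟩ := Finset.mem_sdiff.1 hx
    refine Finset.mem_sdiff.2 ⟨?_, hxU⟩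
    by_contra hxS
    exact hxU (hXU (Finset.mem_sdiff.2 ⟨hxA, hxS⟩))
  have h2 : ∑ x ∈ A \ U, f x ≤ ((S \ U).card : ℝ) := by
    calc ∑ x ∈ A \ U, f x ≤ ∑ x ∈ A \ U, (1:ℝ) := Finset.sum_le_sum fun i _ => hf1 i
      _ = ((A \ U).card : ℝ) := by simp
      _ ≤ ((S \ U).card : ℝ) := by exact_mod_cast Finset.card_le_card hAU
  have hfin : (U ∩ S).card + (S \ U).card = S.card := by
    rw [Finset.inter_comm]
    exact Finset.card_inter_add_card_sdiff S U
  rw [split]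
  calc ∑ x ∈ A ∩ U, f x + ∑ x ∈ A \ U, f x
      ≤ ((U ∩ S).card : ℝ) + ((S \ U).card : ℝ) := add_le_add h1 h2
    _ = (S.card : ℝ) := by exact_mod_cast congrArg (Nat.cast (R := ℝ)) hfin

/-- The target slots available to a location `ω`. -/
def targets (Part : N → Finset (Finset Ω)) (K : N → ℕ) [Fintype N] [DecidableEq Ω]
    (ω : Ω) : Finset (N × Finset Ω × ℕ) :=
  Finset.univ.biUnion fun i =>
    ((Part i).filter fun π => ω ∈ π).biUnion fun π =>
      (Finset.range (K i)).image fun k => (i, π, k)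

lemma mem_targets {ω : Ω} {x : N × Finset Ω × ℕ} :
    x ∈ targets Part K ω ↔ x.2.1 ∈ Part x.1 ∧ ω ∈ x.2.1 ∧ x.2.2 < K x.1 := by
  obtain ⟨i, π, k⟩ := x
  simp only [targets, Finset.mem_biUnion, Finset.mem_univ, true_and, Finset.mem_filter,
    Finset.mem_image, Finset.mem_range, Prod.mk.injEq]
  constructor
  · rintro ⟨i', π', ⟨hπ', hω⟩, k', hk', rfl, rfl, rfl⟩
    exact ⟨hπ', hω, hk'⟩
  · rintro ⟨hπ, hω, hk⟩
    exact ⟨i, π, ⟨hπ, hω⟩, k, hk, rfl, rfl, rfl⟩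

lemma card_biUnion_targets (W : Finset Ω) :
    (W.biUnion (targets Part K)).card = capN Part K W := by
  have hset : W.biUnion (targets Part K) =
      Finset.univ.biUnion fun i =>
        ((Part i).filter fun π => (π ∩ W).Nonempty).biUnion fun π =>
          (Finset.range (K i)).image fun k => (i, π, k) := by
    ext x
    obtain ⟨i, π, k⟩ := x
    simp only [Finset.mem_biUnion, mem_targets, Finset.mem_univ, true_and, Finset.mem_filter,
      Finset.mem_image, Finset.mem_range, Prod.mk.injEq]
    constructor
    · rintro ⟨ω, hω, hπ, hωπ, hk⟩
      exact ⟨i, π, ⟨hπ, ⟨ω, Finset.mem_inter.2 ⟨hωπ, hω⟩⟩⟩, k, hk, rfl, rfl, rfl⟩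
    · rintro ⟨i', π', ⟨hπ', ⟨ω, hω⟩⟩, k', hk', rfl, rfl, rfl⟩
      obtain ⟨hωπ, hωW⟩ := Finset.mem_inter.1 hω
      exact ⟨ω, hωW, hπ', hωπ, hk'⟩
  rw [hset]
  rw [Finset.card_biUnion]
  · rw [capN]
    refine Finset.sum_congr rfl fun i _ => ?_
    rw [Finset.card_biUnion]
    · rw [Finset.sum_congr rfl (fun π _ => ?_), Finset.sum_const, smul_eq_mul, Nat.mul_comm]
      rw [Finset.card_image_of_injective _ (fun a b h => by simpa using h), Finset.card_range]
    · intro π hπ π' hπ' hne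
      simp only [Finset.disjoint_left, Finset.mem_image]
      rintro x ⟨k, _, rfl⟩ ⟨k', _, h⟩
      have h2 := congrArg (fun p => p.2.1) h
      simp only at h2
      exact hne h2.symm
  · intro i _ j _ hij
    simp only [Finset.disjoint_left, Finset.mem_biUnion, Finset.mem_image]
    rintro x ⟨π, _, k, _, rfl⟩ ⟨π', _, k', _, h⟩
    have h2 := congrArg Prod.fst h
    simp only at h2
    exact hij h2.symm

/-- From an independent set, build a valid strategy searching all of it. -/
lemma exists_strategy_of_indep {S : Finset Ω} (hS : IndepS Part K S) :
    ∃ s : N → Finset Ω → Finset Ω, ValidStrat Part K s ∧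
      ∀ ω ∈ S, searched Part s ω := by
  -- Hall's condition
  have hall : ∀ t : Finset {x // x ∈ S},
      t.card ≤ (t.biUnion fun x => targets Part K x.val).card := by
    intro t
    have him : (t.biUnion fun x => targets Part K x.val)
        = (t.image Subtype.val).biUnion (targets Part K) := by
      ext x
      simp only [Finset.mem_biUnion, Finset.mem_image]
      constructor
      · rintro ⟨a, ha, hx⟩; exact ⟨a.val, ⟨a, ha, rfl⟩, hx⟩
      · rintro ⟨ω, ⟨a, ha, rfl⟩, hx⟩; exact ⟨a, ha, hx⟩
    rw [him, card_biUnion_targets]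
    have hsub : t.image Subtype.val ⊆ S := by
      intro x hx
      obtain ⟨a, _, rfl⟩ := Finset.mem_image.1 hx
      exact a.2
    have := hS _ hsub
    rwa [Finset.card_image_of_injective _ Subtype.val_injective] at this
  obtain ⟨F, hFinj, hFmem⟩ :=
    (Finset.all_card_le_biUnion_card_iff_exists_injective
      (fun x : {x // x ∈ S} => targets Part K x.val)).1 hall
  -- the strategy
  refine ⟨fun i π => S.filter fun ω =>
      ∀ h : ω ∈ S, (F ⟨ω, h⟩).1 = i ∧ (F ⟨ω, h⟩).2.1 = π, ?_, ?_⟩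
  · intro i π hπ
    constructor
    · intro ω hω
      obtain ⟨hωS, hω2⟩ := Finset.mem_filter.1 hω
      obtain ⟨h1, h2⟩ := hω2 hωS
      have := mem_targets.1 (hFmem ⟨ω, hωS⟩)
      rw [h2] at this
      exact this.2.1
    · have : (S.filter fun ω =>
          ∀ h : ω ∈ S, (F ⟨ω, h⟩).1 = i ∧ (F ⟨ω, h⟩).2.1 = π).card
          ≤ (Finset.range (K i)).card := by
        refine Finset.card_le_card_of_injOn
          (fun ω => if h : ω ∈ S then (F ⟨ω, h⟩).2.2 else 0)
          (fun ω hω => ?_) (fun ω hω ω' hω' heq => ?_)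
        · obtain ⟨hωS, hω2⟩ := Finset.mem_filter.1 hω
          obtain ⟨h1, h2⟩ := hω2 hωS
          have := mem_targets.1 (hFmem ⟨ω, hωS⟩)
          simp only [dif_pos hωS]
          rw [h1] at this
          exact Finset.mem_range.2 this.2.2
        · simp only [Finset.coe_filter, Set.mem_setOf_eq] at hω hω'
          obtain ⟨hωS, hc⟩ := hω
          obtain ⟨hωS', hc'⟩ := hω'
          obtain ⟨h1, h2⟩ := hc hωS
          obtain ⟨h1', h2'⟩ := hc' hωS'
          simp only [dif_pos hωS, dif_pos hωS'] at heq
          have : F ⟨ω, hωS⟩ = F ⟨ω', hωS'⟩ := by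
            refine Prod.ext (h1.trans h1'.symm) (Prod.ext (h2.trans h2'.symm) heq)
          exact congrArg Subtype.val (hFinj this)
      simpa using this
  · intro ω hω
    have hmem := mem_targets.1 (hFmem ⟨ω, hω⟩)
    refine ⟨(F ⟨ω, hω⟩).1, (F ⟨ω, hω⟩).2.1, hmem.1, hmem.2.1, ?_⟩
    refine Finset.mem_filter.2 ⟨hω, fun h => ?_⟩
    exact ⟨rfl, rfl⟩

lemma greedy_ind [Fintype Ω] {f w : Ω → ℝ}
    (hF : ∀ W : Finset Ω, ∑ x ∈ W, f x ≤ (capN Part K W : ℝ))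
    (hf0 : ∀ x, 0 ≤ f x) (hf1 : ∀ x, f x ≤ 1) (hw0 : ∀ x, 0 ≤ w x) :
    ∀ l : List Ω, l.Nodup → l.Pairwise (fun a b => w b ≤ w a) →
    ∀ (S₀ C : Finset Ω) (W₀ : ℝ), IndepS Part K S₀ → S₀ ⊆ C →
      (∀ x ∈ C, x ∉ S₀ → ¬ IndepS Part K (insert x S₀)) →
      (∀ x ∈ l, x ∉ C) → (∀ x ∈ l, w x ≤ W₀) → 0 ≤ W₀ →
      ∃ S : Finset Ω, IndepS Part K S ∧ S₀ ⊆ S ∧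
        ∑ x ∈ l.toFinset, f x * w x ≤
          ∑ x ∈ S \ S₀, w x + W₀ * ((S₀.card : ℝ) - ∑ x ∈ C, f x) := by
  intro l
  induction l with
  | nil =>
      intro _ _ S₀ C W₀ hI hsub hmax _ _ hW₀
      refine ⟨S₀, hI, Finset.Subset.refl _, ?_⟩
      have hD0 : ∑ x ∈ C, f x ≤ (S₀.card : ℝ) := sum_f_le_card hF hf0 hf1 hI hsub hmax
      simp only [List.toFinset_nil, Finset.sum_empty, Finset.sdiff_self]
      have : 0 ≤ W₀ * ((S₀.card : ℝ) - ∑ x ∈ C, f x) :=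
        mul_nonneg hW₀ (by linarith)
      linarith
  | cons a rest ih =>
      intro hnd hpw S₀ C W₀ hI hsub hmax hlC hlW hW₀
      have haC : a ∉ C := hlC a List.mem_cons_self
      have haS₀ : a ∉ S₀ := fun h => haC (hsub h)
      have hand : a ∉ rest := (List.nodup_cons.1 hnd).1
      have hrnd : rest.Nodup := (List.nodup_cons.1 hnd).2
      have hwa_rest : ∀ x ∈ rest, w x ≤ w a := List.pairwise_cons.1 hpw |>.1
      have hrpw : rest.Pairwise fun a b => w b ≤ w a := (List.pairwise_cons.1 hpw).2
      have hwa0 : 0 ≤ w a := hw0 a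
      have hwaW : w a ≤ W₀ := hlW a List.mem_cons_self
      have hD0 : ∑ x ∈ C, f x ≤ (S₀.card : ℝ) := sum_f_le_card hF hf0 hf1 hI hsub hmax
      -- the greedy step
      by_cases hb : IndepS Part K (insert a S₀)
      · -- accept a
        set S₁ := insert a S₀ with hS₁
        have hsub₁ : S₁ ⊆ insert a C := Finset.insert_subset_insert _ hsub
        have hmax₁ : ∀ x ∈ insert a C, x ∉ S₁ → ¬ IndepS Part K (insert x S₁) := by
          intro x hx hxS₁ hcon
          rcases Finset.mem_insert.1 hx with rfl | hxC
          · exact hxS₁ (Finset.mem_insert_self _ _)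
          · have hxS₀ : x ∉ S₀ := fun h => hxS₁ (Finset.mem_insert_of_mem h)
            refine hmax x hxC hxS₀ (indepS_subset hcon ?_)
            intro y hy
            rcases Finset.mem_insert.1 hy with rfl | hy
            · exact Finset.mem_insert_self _ _
            · exact Finset.mem_insert_of_mem (Finset.mem_insert_of_mem hy)
        obtain ⟨S, hIS, hS₁S, ineq⟩ := ih hrnd hrpw S₁ (insert a C) (w a) hb hsub₁ hmax₁
          (fun x hx => by
            simp only [Finset.mem_insert, not_or]
            exact ⟨fun h => hand (h ▸ hx), hlC x (List.mem_cons_of_mem a hx)⟩)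
          hwa_rest hwa0
        refine ⟨S, hIS, fun x hx => hS₁S (Finset.mem_insert_of_mem hx), ?_⟩
        have haS : a ∈ S := hS₁S (Finset.mem_insert_self _ _)
        have hsdiff : S \ S₀ = insert a (S \ S₁) := by
          ext x
          simp only [Finset.mem_sdiff, Finset.mem_insert, hS₁, not_or]
          constructor
          · rintro ⟨hxS, hxS₀⟩
            by_cases hxa : x = a
            · exact Or.inl hxa
            · exact Or.inr ⟨hxS, hxa, hxS₀⟩
          · rintro (rfl | ⟨hxS, _, hxS₀⟩)
            · exact ⟨haS, haS₀⟩
            · exact ⟨hxS, hxS₀⟩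
        have hnotmem : a ∉ S \ S₁ := fun h =>
          (Finset.mem_sdiff.1 h).2 (Finset.mem_insert_self _ _)
        have hsum : ∑ x ∈ S \ S₀, w x = w a + ∑ x ∈ S \ S₁, w x := by
          rw [hsdiff, Finset.sum_insert hnotmem]
        have hcard : (S₁.card : ℝ) = (S₀.card : ℝ) + 1 := by
          rw [hS₁, Finset.card_insert_of_notMem haS₀]; push_cast; ring
        have hCf : ∑ x ∈ insert a C, f x = f a + ∑ x ∈ C, f x :=
          Finset.sum_insert haC
        have hLHS : ∑ x ∈ (a :: rest).toFinset, f x * w x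
            = f a * w a + ∑ x ∈ rest.toFinset, f x * w x := by
          rw [List.toFinset_cons, Finset.sum_insert (by simpa using hand)]
        have expand : w a * ((S₁.card : ℝ) - ∑ x ∈ insert a C, f x)
            = w a * ((S₀.card : ℝ) - ∑ x ∈ C, f x) + w a - w a * f a := by
          rw [hcard, hCf]; ring
        have key : w a * ((S₀.card : ℝ) - ∑ x ∈ C, f x)
            ≤ W₀ * ((S₀.card : ℝ) - ∑ x ∈ C, f x) :=
          mul_le_mul_of_nonneg_right hwaW (by linarith)
        have hcm : f a * w a = w a * f a := mul_comm _ _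
        rw [hLHS, hsum]
        linarith [ineq, expand, key, hcm]
      · -- reject a
        have hmax₁ : ∀ x ∈ insert a C, x ∉ S₀ → ¬ IndepS Part K (insert x S₀) := by
          intro x hx hxS₀
          rcases Finset.mem_insert.1 hx with rfl | hxC
          · exact hb
          · exact hmax x hxC hxS₀
        obtain ⟨S, hIS, hS₀S, ineq⟩ := ih hrnd hrpw S₀ (insert a C) (w a) hI
          (hsub.trans (Finset.subset_insert _ _)) hmax₁
          (fun x hx => by
            simp only [Finset.mem_insert, not_or]
            exact ⟨fun h => hand (h ▸ hx), hlC x (List.mem_cons_of_mem a hx)⟩)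
          hwa_rest hwa0
        refine ⟨S, hIS, hS₀S, ?_⟩
        have hCf : ∑ x ∈ insert a C, f x = f a + ∑ x ∈ C, f x :=
          Finset.sum_insert haC
        have hLHS : ∑ x ∈ (a :: rest).toFinset, f x * w x
            = f a * w a + ∑ x ∈ rest.toFinset, f x * w x := by
          rw [List.toFinset_cons, Finset.sum_insert (by simpa using hand)]
        have expand : w a * ((S₀.card : ℝ) - ∑ x ∈ insert a C, f x)
            = w a * ((S₀.card : ℝ) - ∑ x ∈ C, f x) - w a * f a := by
          rw [hCf]; ring
        have key : w a * ((S₀.card : ℝ) - ∑ x ∈ C, f x)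
            ≤ W₀ * ((S₀.card : ℝ) - ∑ x ∈ C, f x) :=
          mul_le_mul_of_nonneg_right hwaW (by linarith)
        have hcm : f a * w a = w a * f a := mul_comm _ _
        rw [hLHS]
        linarith [ineq, expand, key, hcm]

/-- Lower bound for the socially optimal payoff: if `f` is a compatible mixed
outcome, then some pure strategy profile yields a social payoff of at least
`∑_ω f ω · μ ω · vs ω`; hence `U_opt` is at least this quantity. -/
theorem socially_optimal_payoff_lower_bound_of_compatible
    {N Ω : Type} [Fintype N] [Fintype Ω] [DecidableEq Ω]
    (Part : N → Finset (Finset Ω)) (K : N → ℕ)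
    (hPart : ∀ i, IsPartition (Part i))
    (μ : Ω → ℝ) (hμ_nonneg : ∀ ω, 0 ≤ μ ω) (hμ_sum : ∑ ω, μ ω = 1)
    (vs : Ω → ℝ) (hvs : ∀ ω, 0 ≤ vs ω)
    (f : Ω → ℝ) (hf0 : ∀ ω, 0 ≤ f ω) (hf1 : ∀ ω, f ω ≤ 1)
    (hcompat : ∀ W : Finset Ω,
      ∑ ω ∈ W, f ω ≤
        ∑ i, (K i : ℝ) *
          (((Part i).filter fun π => (π ∩ W).Nonempty).card : ℝ)) :
    ∃ s : N → Finset Ω → Finset Ω, ValidStrat Part K s ∧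
      ∑ ω, f ω * (μ ω * vs ω) ≤
        ∑ ω, μ ω * vs ω * (if searched Part s ω then 1 else 0) := by
  classical
  have hw0 : ∀ x : Ω, 0 ≤ μ x * vs x := fun x => mul_nonneg (hμ_nonneg x) (hvs x)
  set w : Ω → ℝ := fun ω => μ ω * vs ω with hw
  have hF : ∀ W : Finset Ω, ∑ x ∈ W, f x ≤ (capN Part K W : ℝ) := by
    intro W
    have := hcompat W
    rw [capN]
    push_cast
    exact this
  set le : Ω → Ω → Bool := fun a b => decide (w b ≤ w a) with hle
  set l : List Ω := Finset.univ.toList.mergeSort le with hl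
  have hperm := List.mergeSort_perm (Finset.univ : Finset Ω).toList le
  have hnd : l.Nodup := hperm.nodup_iff.2 (Finset.nodup_toList _)
  have hmem : ∀ x : Ω, x ∈ l := fun x =>
    hperm.mem_iff.2 (Finset.mem_toList.2 (Finset.mem_univ x))
  have hsorted' := List.pairwise_mergeSort (le := le)
      (fun a b c hab hbc => by
        simp only [hle, decide_eq_true_eq] at *
        exact le_trans hbc hab)
      (fun a b => by
        simp only [hle, Bool.or_eq_true, decide_eq_true_eq]
        exact le_total (w b) (w a))
      (Finset.univ : Finset Ω).toList
  have hpw : l.Pairwise fun a b => w b ≤ w a := by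
    refine List.Pairwise.imp ?_ hsorted'
    intro a b h
    simpa [hle] using h
  have hWbound : ∀ x ∈ l, w x ≤ ∑ y, w y := fun x _ =>
    Finset.single_le_sum (fun y _ => hw0 y) (Finset.mem_univ x)
  have hW0 : (0:ℝ) ≤ ∑ y, w y := Finset.sum_nonneg fun y _ => hw0 y
  have hIempty : IndepS Part K ∅ := by
    intro W hW
    rw [Finset.subset_empty.1 hW]
    simp
  obtain ⟨S, hIS, -, hineq⟩ := greedy_ind hF hf0 hf1 hw0 l hnd hpw ∅ ∅ (∑ y, w y)
    hIempty (Finset.Subset.refl _) (by simp) (by simp) hWbound hW0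
  have hlfin : l.toFinset = Finset.univ := by
    ext x; simp [hmem x]
  rw [hlfin] at hineq
  simp only [Finset.sdiff_empty, Finset.card_empty, Finset.sum_empty, Nat.cast_zero,
    sub_zero, mul_zero, add_zero] at hineq
  obtain ⟨s, hvalid, hsearch⟩ := exists_strategy_of_indep hIS
  refine ⟨s, hvalid, ?_⟩
  have step2 : ∑ x ∈ S, w x ≤ ∑ ω, μ ω * vs ω * (if searched Part s ω then 1 else 0) := by
    have e : ∑ x ∈ S, w x = ∑ ω, (if ω ∈ S then w ω else 0) := by
      rw [Finset.sum_ite_mem, Finset.univ_inter]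
    rw [e]
    refine Finset.sum_le_sum fun ω _ => ?_
    by_cases hωS : ω ∈ S
    · rw [if_pos hωS, if_pos (hsearch ω hωS), mul_one]
    · rw [if_neg hωS]
      refine mul_nonneg (hw0 ω) ?_
      split <;> norm_num
  calc ∑ ω, f ω * (μ ω * vs ω) = ∑ x, f x * w x := by rw [hw]
    _ ≤ ∑ x ∈ S, w x := hineq
    _ ≤ _ := step2
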